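/- Shifted lower bound for integer power connectives: Fix an integer d ≥ 1 and a positive integer m. There exist a finite-dimensional real inner product space H and vectors x_1,…,x_{2^m}, y_1,…,y_{2^m} in the closed unit ball of H such that for all 1 ≤ i < j ≤ 2^m, ⟪x_i,y_j⟫^d − ⟪x_j,y_i⟫^d ≥ (d/2^d)/m. In particular, the predicate f_d(x,y) = ⟪x,y⟫^d on the unit ball is not (2^m, (d·2^(−d))/m)-stable. -/

import Mathlib

open RealInnerProductSpace


lemma sum_bit_lemma (m : ℕ) : ∀ i j : ℕ, i < 2^m → j < 2^m →
    (∑ p ∈ Finset.range m, (if i / 2^(p+1) = j / 2^(p+1)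
      then ((j / 2^p % 2 : ℕ) : ℤ) - ((i / 2^p % 2 : ℕ) : ℤ) else 0))
    = if i < j then 1 else if j < i then -1 else 0 := by
  induction m with
  | zero => intro i j hi hj; interval_cases i <;> interval_cases j <;> simp
  | succ m ih =>
    intro i j hi hj
    rw [Finset.sum_range_succ']
    have h2 : ∀ (k p : ℕ), k / 2^(p+1) = (k/2) / 2^p := by
      intro k p
      rw [Nat.div_div_eq_div_mul, pow_succ']
    have hpow : 2^(m+1) = 2 * 2^m := by rw [pow_succ']
    have key : (∑ p ∈ Finset.range m, (if i / 2^(p+1+1) = j / 2^(p+1+1)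
        then ((j / 2^(p+1) % 2 : ℕ) : ℤ) - ((i / 2^(p+1) % 2 : ℕ) : ℤ) else 0))
        = if i/2 < j/2 then 1 else if j/2 < i/2 then -1 else 0 := by
      rw [← ih (i/2) (j/2) (by omega) (by omega)]
      refine Finset.sum_congr rfl ?_
      intro p _
      rw [h2 i (p+1), h2 j (p+1), h2 i p, h2 j p]
    rw [key]
    simp only [pow_one, pow_zero, Nat.div_one]
    split_ifs <;> omega

abbrev Idx (m : ℕ) := Unit ⊕ (Fin m × Bool × Fin (2^m))

noncomputable def bsign (k p : ℕ) : ℝ := 2 * ((k / 2^p % 2 : ℕ) : ℝ) - 1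

lemma bsign_sq (k p : ℕ) : bsign k p * bsign k p = 1 := by
  have h : k / 2^p % 2 = 0 ∨ k / 2^p % 2 = 1 := by omega
  rcases h with h | h <;> simp [bsign, h] <;> ring

noncomputable def xv (m i : ℕ) : EuclideanSpace ℝ (Idx m) := WithLp.toLp 2 fun (t : Idx m) =>
  match t with
  | Sum.inl _ => Real.sqrt (1/2)
  | Sum.inr (p, false, r) => if (r:ℕ) = i / 2^((p:ℕ)+1) then (2 * Real.sqrt m)⁻¹ else 0
  | Sum.inr (p, true, r) => if (r:ℕ) = i / 2^((p:ℕ)+1) then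
      -((2 * Real.sqrt m)⁻¹ * bsign i p) else 0

noncomputable def yv (m j : ℕ) : EuclideanSpace ℝ (Idx m) := WithLp.toLp 2 fun (t : Idx m) =>
  match t with
  | Sum.inl _ => Real.sqrt (1/2)
  | Sum.inr (p, false, r) => if (r:ℕ) = j / 2^((p:ℕ)+1) then
      (2 * Real.sqrt m)⁻¹ * bsign j p else 0
  | Sum.inr (p, true, r) => if (r:ℕ) = j / 2^((p:ℕ)+1) then (2 * Real.sqrt m)⁻¹ else 0

lemma sum_ite_mul {P : ℕ} (a b : ℕ) (ha : a < P) (X Y : ℝ) :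
    (∑ r : Fin P, (if (r:ℕ) = a then X else 0) * (if (r:ℕ) = b then Y else 0))
    = if a = b then X * Y else 0 := by
  rw [Fintype.sum_eq_single (⟨a, ha⟩ : Fin P)]
  · by_cases hab : a = b <;> simp [hab]
  · intro r hr
    have h : (r : ℕ) ≠ a := fun h => hr (Fin.ext h)
    simp [h]

lemma inner_xy (m : ℕ) (hm : 0 < m) (i j : ℕ) (hi : i < 2^m) (hj : j < 2^m) :
    ⟪xv m i, yv m j⟫ = 1/2 + (1/(2*m)) *
      (((if i < j then 1 else if j < i then -1 else 0 : ℤ)) : ℝ) := by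
  have hB : (2 * Real.sqrt m)⁻¹ * (2 * Real.sqrt m)⁻¹ = 1/(4*m) := by
    rw [← mul_inv]
    rw [show (2 * Real.sqrt m) * (2 * Real.sqrt m) = 4 * (Real.sqrt m * Real.sqrt m) by ring,
      Real.mul_self_sqrt (by positivity)]
    exact (one_div _).symm
  have hC : Real.sqrt (1/2) * Real.sqrt (1/2) = 1/2 :=
    Real.mul_self_sqrt (by norm_num)
  rw [PiLp.inner_apply]
  simp only [RCLike.inner_apply, conj_trivial]
  rw [Fintype.sum_sum_type]
  simp only [Fintype.sum_prod_type, Fintype.sum_bool]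
  have hx : ∀ i, i / 2 / 1 = i / 2 := fun i => Nat.div_one _
  have hcomm : ∀ t, (yv m j).ofLp t * (xv m i).ofLp t = (xv m i).ofLp t * (yv m j).ofLp t :=
    fun t => mul_comm _ _
  simp only [hcomm]
  have step : ∀ p : Fin m,
      ((∑ r : Fin (2^m), xv m i (Sum.inr (p, true, r)) * yv m j (Sum.inr (p, true, r)))
      + ∑ r : Fin (2^m), xv m i (Sum.inr (p, false, r)) * yv m j (Sum.inr (p, false, r)))
      = if i / 2^((p:ℕ)+1) = j / 2^((p:ℕ)+1) then
          (1/(2*m)) * (((j / 2^(p:ℕ) % 2 : ℕ) : ℝ) - ((i / 2^(p:ℕ) % 2 : ℕ) : ℝ)) else 0 := by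
    intro p
    have hpre : i / 2^((p:ℕ)+1) < 2^m := lt_of_le_of_lt (Nat.div_le_self _ _) hi
    simp only [xv, yv, WithLp.ofLp_toLp]
    rw [sum_ite_mul _ _ hpre, sum_ite_mul _ _ hpre]
    split_ifs with h
    · rw [show -((2*Real.sqrt m)⁻¹ * bsign i ↑p) * (2*Real.sqrt m)⁻¹ +
          (2*Real.sqrt m)⁻¹ * ((2*Real.sqrt m)⁻¹ * bsign j ↑p)
          = ((2*Real.sqrt m)⁻¹*(2*Real.sqrt m)⁻¹) * (bsign j ↑p - bsign i ↑p) from by ring, hB]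
      unfold bsign; ring
    · ring
  rw [Finset.sum_congr rfl (fun p _ => step p)]
  have conv : (∑ p : Fin m, (if i / 2^((p:ℕ)+1) = j / 2^((p:ℕ)+1) then
          (1/(2*(m:ℝ))) * (((j / 2^(p:ℕ) % 2 : ℕ) : ℝ) - ((i / 2^(p:ℕ) % 2 : ℕ) : ℝ)) else 0))
      = (1/(2*m)) * (((∑ p ∈ Finset.range m, (if i / 2^(p+1) = j / 2^(p+1)
      then ((j / 2^p % 2 : ℕ) : ℤ) - ((i / 2^p % 2 : ℕ) : ℤ) else 0)) : ℤ) : ℝ) := by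
    rw [← Fin.sum_univ_eq_sum_range, Int.cast_sum, Finset.mul_sum]
    refine Finset.sum_congr rfl fun p _ => ?_
    split_ifs
    · rw [Int.cast_sub, Int.cast_natCast, Int.cast_natCast]
    · simp
  rw [conv, sum_bit_lemma m i j hi hj]
  simp only [xv, yv, WithLp.ofLp_toLp]
  rw [Finset.sum_const, Finset.card_univ]
  simp only [Fintype.card_unit, one_smul]
  rw [hC]

lemma inner_self_xv (m : ℕ) (hm : 0 < m) (i : ℕ) (hi : i < 2^m) :
    ⟪xv m i, xv m i⟫ = 1 := by
  have hB : (2 * Real.sqrt m)⁻¹ * (2 * Real.sqrt m)⁻¹ = 1/(4*m) := by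
    rw [← mul_inv]
    rw [show (2 * Real.sqrt m) * (2 * Real.sqrt m) = 4 * (Real.sqrt m * Real.sqrt m) by ring,
      Real.mul_self_sqrt (by positivity)]
    exact (one_div _).symm
  have hC : Real.sqrt (1/2) * Real.sqrt (1/2) = 1/2 :=
    Real.mul_self_sqrt (by norm_num)
  have hm' : (m:ℝ) ≠ 0 := by positivity
  rw [PiLp.inner_apply]
  simp only [RCLike.inner_apply, conj_trivial]
  rw [Fintype.sum_sum_type]
  simp only [Fintype.sum_prod_type, Fintype.sum_bool]
  have step : ∀ p : Fin m,
      ((∑ r : Fin (2^m), xv m i (Sum.inr (p, true, r)) * xv m i (Sum.inr (p, true, r)))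
      + ∑ r : Fin (2^m), xv m i (Sum.inr (p, false, r)) * xv m i (Sum.inr (p, false, r)))
      = 1/(2*m) := by
    intro p
    have hpre : i / 2^((p:ℕ)+1) < 2^m := lt_of_le_of_lt (Nat.div_le_self _ _) hi
    simp only [xv, WithLp.ofLp_toLp]
    rw [sum_ite_mul _ _ hpre, sum_ite_mul _ _ hpre, if_pos rfl, if_pos rfl]
    rw [show -((2*Real.sqrt m)⁻¹ * bsign i ↑p) * -((2*Real.sqrt m)⁻¹ * bsign i ↑p)
        = ((2*Real.sqrt m)⁻¹ * (2*Real.sqrt m)⁻¹) * (bsign i ↑p * bsign i ↑p) from by ring,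
      bsign_sq, hB]
    field_simp
    ring
  rw [Finset.sum_congr rfl (fun p _ => step p), Finset.sum_const, Finset.card_univ,
    Fintype.card_fin, nsmul_eq_mul]
  simp only [xv, WithLp.ofLp_toLp]
  rw [Finset.sum_const, Finset.card_univ]
  simp only [Fintype.card_unit, one_smul]
  rw [hC]
  field_simp
  ring

lemma inner_self_yv (m : ℕ) (hm : 0 < m) (j : ℕ) (hj : j < 2^m) :
    ⟪yv m j, yv m j⟫ = 1 := by
  have hB : (2 * Real.sqrt m)⁻¹ * (2 * Real.sqrt m)⁻¹ = 1/(4*m) := by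
    rw [← mul_inv]
    rw [show (2 * Real.sqrt m) * (2 * Real.sqrt m) = 4 * (Real.sqrt m * Real.sqrt m) by ring,
      Real.mul_self_sqrt (by positivity)]
    exact (one_div _).symm
  have hC : Real.sqrt (1/2) * Real.sqrt (1/2) = 1/2 :=
    Real.mul_self_sqrt (by norm_num)
  have hm' : (m:ℝ) ≠ 0 := by positivity
  rw [PiLp.inner_apply]
  simp only [RCLike.inner_apply, conj_trivial]
  rw [Fintype.sum_sum_type]
  simp only [Fintype.sum_prod_type, Fintype.sum_bool]
  have step : ∀ p : Fin m,
      ((∑ r : Fin (2^m), yv m j (Sum.inr (p, true, r)) * yv m j (Sum.inr (p, true, r)))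
      + ∑ r : Fin (2^m), yv m j (Sum.inr (p, false, r)) * yv m j (Sum.inr (p, false, r)))
      = 1/(2*m) := by
    intro p
    have hpre : j / 2^((p:ℕ)+1) < 2^m := lt_of_le_of_lt (Nat.div_le_self _ _) hj
    simp only [yv, WithLp.ofLp_toLp]
    rw [sum_ite_mul _ _ hpre, sum_ite_mul _ _ hpre, if_pos rfl, if_pos rfl]
    rw [show (2*Real.sqrt m)⁻¹ * bsign j ↑p * ((2*Real.sqrt m)⁻¹ * bsign j ↑p)
        = ((2*Real.sqrt m)⁻¹ * (2*Real.sqrt m)⁻¹) * (bsign j ↑p * bsign j ↑p) from by ring,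
      bsign_sq, hB]
    field_simp
    ring
  rw [Finset.sum_congr rfl (fun p _ => step p), Finset.sum_const, Finset.card_univ,
    Fintype.card_fin, nsmul_eq_mul]
  simp only [yv, WithLp.ofLp_toLp]
  rw [Finset.sum_const, Finset.card_univ]
  simp only [Fintype.card_unit, one_smul]
  rw [hC]
  field_simp
  ring

lemma pow_gap (d m : ℕ) (hd : 1 ≤ d) (hm : 0 < m) :
    ((d:ℝ)/2^d)/m ≤ (1/2 + 1/(2*m))^d - (1/2 - 1/(2*m))^d := by
  have hm' : (0:ℝ) < m := by exact_mod_cast hm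
  have h1 : (1/2 + 1/(2*(m:ℝ))) = (1/2) * (1 + 1/m) := by field_simp
  have h2 : (1/2 - 1/(2*(m:ℝ))) = (1/2) * (1 - 1/m) := by field_simp
  rw [h1, h2, mul_pow, mul_pow]
  have h0 : (0:ℝ) ≤ 1/m := by positivity
  have hb : 1 + (d:ℝ) * (1/m) ≤ (1 + 1/m)^d :=
    one_add_mul_le_pow (by linarith) d
  have hle1 : 1/(m:ℝ) ≤ 1 := by
    rw [div_le_one hm']; exact_mod_cast hm
  have hp : (1 - 1/(m:ℝ))^d ≤ 1 := pow_le_one₀ (by linarith) (by linarith)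
  have hpos : (0:ℝ) < (1/2:ℝ)^d := by positivity
  have h3 : (1/2:ℝ)^d * 2^d = 1 := by
    rw [← mul_pow]; norm_num
  have key : (1/2:ℝ)^d * ((d:ℝ) * (1/m)) ≤ (1/2)^d * (1+1/m)^d - (1/2)^d * (1-1/m)^d := by
    nlinarith [mul_le_mul_of_nonneg_left hb hpos.le, mul_le_mul_of_nonneg_left hp hpos.le]
  calc ((d:ℝ)/2^d)/m = (1/2:ℝ)^d * ((d:ℝ) * (1/m)) := by
        field_simp
        linarith [h3]
    _ ≤ _ := key

/-- Shifted lower bound for integer power connectives `⟪x,y⟫^d`. -/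
theorem integer_power_shifted_lower_bound (d : ℕ) (hd : 1 ≤ d) (m : ℕ) (hm : 0 < m) :
    ∃ (N : ℕ) (x y : Fin (2 ^ m) → EuclideanSpace ℝ (Fin N)),
      (∀ i, ‖x i‖ ≤ 1) ∧ (∀ i, ‖y i‖ ≤ 1) ∧
      ∀ i j : Fin (2 ^ m), i < j →
        ((d : ℝ) / 2 ^ d) / (m : ℝ) ≤ ⟪x i, y j⟫ ^ d - ⟪x j, y i⟫ ^ d := by
  classical
  set e := Fintype.equivFin (Idx m)
  set E := LinearIsometryEquiv.piLpCongrLeft 2 ℝ ℝ e with hE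
  refine ⟨Fintype.card (Idx m), fun i => E (xv m (i:ℕ)), fun j => E (yv m (j:ℕ)), ?_, ?_, ?_⟩
  · intro i
    rw [E.norm_map]
    have h := inner_self_xv m hm i i.isLt
    rw [real_inner_self_eq_norm_sq] at h
    nlinarith [norm_nonneg (xv m (i:ℕ))]
  · intro j
    rw [E.norm_map]
    have h := inner_self_yv m hm j j.isLt
    rw [real_inner_self_eq_norm_sq] at h
    nlinarith [norm_nonneg (yv m (j:ℕ))]
  · intro i j hij
    have hij' : (i:ℕ) < (j:ℕ) := hij
    rw [E.inner_map_map, E.inner_map_map,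
      inner_xy m hm i j i.isLt j.isLt, inner_xy m hm j i j.isLt i.isLt,
      if_pos hij', if_neg (by omega), if_pos hij']
    push_cast
    have := pow_gap d m hd hm
    calc ((d:ℝ)/2^d)/m ≤ (1/2 + 1/(2*m))^d - (1/2 - 1/(2*m))^d := this
      _ = (1/2 + 1/(2*(m:ℝ)) * 1)^d - (1/2 + 1/(2*(m:ℝ)) * (-1))^d := by ring_nf
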